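/- Let p ≥ 1, let h : ℝ^p → ℝ be differentiable, let g : ℝ^p → ℝ be convex and K-Lipschitz with respect to the Euclidean norm, and let D be a p×p diagonal matrix whose diagonal entries all lie in [c₁, c₂] with 0 < c₁ ≤ c₂. For γ > 0 and β ∈ ℝ^p let T_γ(β) denote a minimizer over ℝ^p of x ↦ g(x) + (1/(2γ)) ‖x − (β − γ D⁻¹ ∇h(β))‖_D². If β ∈ ℝ^p satisfies ‖∇h(β)‖ ≤ M, then for all γ, γ' > 0, ‖T_γ(β) − T_{γ'}(β)‖ ≤ (√(c₂) M / c₁^{3/2} + K/c₁) (γ + γ') (Euclidean norms). -/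

import Mathlib

open scoped BigOperators
open MeasureTheory Filter

noncomputable def dInner {p : ℕ} (d : Fin p → ℝ) (x y : EuclideanSpace ℝ (Fin p)) : ℝ :=
  ∑ i, d i * x i * y i

noncomputable def dNorm {p : ℕ} (d : Fin p → ℝ) (x : EuclideanSpace ℝ (Fin p)) : ℝ :=
  Real.sqrt (dInner d x x)

noncomputable def dInvMul {p : ℕ} (d : Fin p → ℝ) (v : EuclideanSpace ℝ (Fin p)) :
    EuclideanSpace ℝ (Fin p) :=
  WithLp.toLp 2 (fun i => (d i)⁻¹ * v i)

section auxLemmas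
variable {p : ℕ} {d : Fin p → ℝ}

lemma euc_norm_sq (v : EuclideanSpace ℝ (Fin p)) : ‖v‖ ^ 2 = ∑ i, (v i) ^ 2 := by
  rw [EuclideanSpace.norm_eq, Real.sq_sqrt (by positivity)]
  simp [Real.norm_eq_abs, sq_abs]

lemma dInner_self_nonneg (hd : ∀ i, 0 ≤ d i) (v : EuclideanSpace ℝ (Fin p)) :
    0 ≤ dInner d v v := by
  apply Finset.sum_nonneg
  intro i _
  have : d i * v i * v i = d i * (v i) ^ 2 := by ring
  rw [this]
  exact mul_nonneg (hd i) (sq_nonneg _)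

lemma dNorm_sq (hd : ∀ i, 0 ≤ d i) (v : EuclideanSpace ℝ (Fin p)) :
    dNorm d v ^ 2 = dInner d v v := Real.sq_sqrt (dInner_self_nonneg hd v)

lemma dInner_smul_self (t : ℝ) (v : EuclideanSpace ℝ (Fin p)) :
    dInner d (t • v) (t • v) = t ^ 2 * dInner d v v := by
  unfold dInner
  rw [Finset.mul_sum]
  refine Finset.sum_congr rfl fun i _ => ?_
  simp only [PiLp.smul_apply, smul_eq_mul]
  ring

lemma dInner_lower {c₁ : ℝ} (hc : 0 ≤ c₁) (hd : ∀ i, c₁ ≤ d i) (v : EuclideanSpace ℝ (Fin p)) :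
    c₁ * ‖v‖ ^ 2 ≤ dInner d v v := by
  rw [euc_norm_sq, Finset.mul_sum]
  apply Finset.sum_le_sum
  intro i _
  have : d i * v i * v i = d i * (v i) ^ 2 := by ring
  rw [this]
  exact mul_le_mul_of_nonneg_right (hd i) (sq_nonneg _)

lemma dInvMul_norm_le {c₁ : ℝ} (hc : 0 < c₁) (hd : ∀ i, c₁ ≤ d i)
    (w : EuclideanSpace ℝ (Fin p)) : ‖dInvMul d w‖ ≤ ‖w‖ / c₁ := by
  have h2 : ‖dInvMul d w‖ ^ 2 ≤ (‖w‖ / c₁) ^ 2 := by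
    rw [euc_norm_sq, div_pow, euc_norm_sq, Finset.sum_div]
    apply Finset.sum_le_sum
    intro i _
    have hdi : 0 < d i := lt_of_lt_of_le hc (hd i)
    have hinv : (d i)⁻¹ ≤ c₁⁻¹ := by
      exact inv_anti₀ hc (hd i)
    have : (dInvMul d w i) ^ 2 = ((d i)⁻¹) ^ 2 * (w i) ^ 2 := by
      simp only [dInvMul, WithLp.ofLp_toLp]; ring
    rw [this, div_eq_mul_inv, mul_comm ((w i)^2), ← inv_pow]
    apply mul_le_mul_of_nonneg_right _ (sq_nonneg _)
    have h0 : (0:ℝ) ≤ (d i)⁻¹ := by positivity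
    nlinarith
  nlinarith [norm_nonneg (dInvMul d w), div_nonneg (norm_nonneg w) hc.le]

end auxLemmas

set_option maxHeartbeats 800000 in
/-- For `h` differentiable, `g` convex and K-Lipschitz, `D` diagonal with entries
in `[c₁, c₂]`, and `T_γ(β) = Prox_{γ,g}^D(β − γ D⁻¹∇h(β))`: if `‖∇h(β)‖ ≤ M` then for all
`γ, γ' > 0`, `‖T_γ(β) − T_{γ'}(β)‖ ≤ (√c₂ M / c₁^{3/2} + K/c₁)(γ + γ')`. -/
theorem stmt_8 {p : ℕ} (hp : 1 ≤ p)
    (h g : EuclideanSpace ℝ (Fin p) → ℝ)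
    (h' : EuclideanSpace ℝ (Fin p) → EuclideanSpace ℝ (Fin p))
    (hdiff : ∀ x, HasGradientAt h (h' x) x)
    (hg : ConvexOn ℝ Set.univ g)
    (K : ℝ) (hK : ∀ x y : EuclideanSpace ℝ (Fin p), |g x - g y| ≤ K * ‖x - y‖)
    (c₁ c₂ : ℝ) (hc₁ : 0 < c₁) (hc₁₂ : c₁ ≤ c₂)
    (d : Fin p → ℝ) (hd : ∀ i, d i ∈ Set.Icc c₁ c₂)
    (T : ℝ → EuclideanSpace ℝ (Fin p) → EuclideanSpace ℝ (Fin p))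
    (hT : ∀ γ : ℝ, 0 < γ → ∀ b x : EuclideanSpace ℝ (Fin p),
      g (T γ b) + (1 / (2 * γ)) * (dNorm d (T γ b - (b - γ • dInvMul d (h' b)))) ^ 2 ≤
        g x + (1 / (2 * γ)) * (dNorm d (x - (b - γ • dInvMul d (h' b)))) ^ 2)
    (β : EuclideanSpace ℝ (Fin p)) (M : ℝ) (hM : ‖h' β‖ ≤ M) :
    ∀ γ γ' : ℝ, 0 < γ → 0 < γ' →
      ‖T γ β - T γ' β‖ ≤
        (Real.sqrt c₂ * M / c₁ ^ ((3 : ℝ) / 2) + K / c₁) * (γ + γ') := by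
  have hd0 : ∀ i, 0 ≤ d i := fun i => le_trans hc₁.le (hd i).1
  have hdc : ∀ i, c₁ ≤ d i := fun i => (hd i).1
  -- K ≥ 0
  have hK0 : 0 ≤ K := by
    have hv : ‖(EuclideanSpace.single (⟨0, hp⟩ : Fin p) (1:ℝ))‖ = 1 := by
      rw [EuclideanSpace.norm_single]; simp
    have := hK (EuclideanSpace.single (⟨0, hp⟩ : Fin p) (1:ℝ)) 0
    rw [sub_zero, hv] at this
    calc (0:ℝ) ≤ |g (EuclideanSpace.single (⟨0, hp⟩ : Fin p) (1:ℝ)) - g 0| := abs_nonneg _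
    _ ≤ K := by simpa using this
  have hM0 : 0 ≤ M := le_trans (norm_nonneg _) hM
  -- key per-γ bound
  have key : ∀ γ : ℝ, 0 < γ →
      ‖T γ β - β‖ ≤ (Real.sqrt c₂ * M / c₁ ^ ((3 : ℝ) / 2) + K / c₁) * γ := by
    intro γ hγ
    set z : EuclideanSpace ℝ (Fin p) := β - γ • dInvMul d (h' β) with hz
    set x : EuclideanSpace ℝ (Fin p) := T γ β with hx
    set Q : ℝ := dInner d (x - z) (x - z) with hQdef
    have hQ0 : 0 ≤ Q := dInner_self_nonneg hd0 _
    -- step: Q / γ ≤ K * ‖x - z‖ + t * Q / (2 * γ) for all t ∈ (0,1]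
    have step : ∀ t : ℝ, 0 < t → t ≤ 1 → Q / γ ≤ K * ‖x - z‖ + t * Q / (2 * γ) := by
      intro t ht0 ht1
      have hcomb := hT γ hγ β (x + t • (z - x))
      rw [← hz, ← hx] at hcomb
      have hxt : x + t • (z - x) - z = (1 - t) • (x - z) := by module
      have hxt2 : x + t • (z - x) = (1 - t) • x + t • z := by module
      have hn1 : dNorm d (x + t • (z - x) - z) ^ 2 = (1 - t) ^ 2 * Q := by
        rw [hxt, dNorm_sq hd0, dInner_smul_self]
      have hn2 : dNorm d (x - z) ^ 2 = Q := dNorm_sq hd0 _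
      have hconv : g (x + t • (z - x)) ≤ (1 - t) * g x + t * g z := by
        rw [hxt2]
        exact hg.2 (Set.mem_univ x) (Set.mem_univ z) (by linarith) ht0.le (by ring)
      have hgz : g z - g x ≤ K * ‖x - z‖ := by
        have := hK z x
        rw [norm_sub_rev] at this
        exact le_trans (le_abs_self _) this
      rw [hn1, hn2] at hcomb
      -- from hcomb : g x + (1/(2γ)) Q ≤ g (x_t) + (1/(2γ)) (1-t)^2 Q
      have h1 : t * (g x - g z) ≤ (1 / (2 * γ)) * (t ^ 2 - 2 * t) * Q := by nlinarith
      have h2 : g x - g z ≤ (1 / (2 * γ)) * (t - 2) * Q := by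
        have h1' : t * (g x - g z) ≤ t * ((1 / (2 * γ)) * (t - 2) * Q) := by nlinarith
        exact le_of_mul_le_mul_left h1' ht0
      have heq : Q / γ - t * Q / (2 * γ) = (1 / (2 * γ)) * (2 - t) * Q := by
        field_simp
      linarith
    -- let t → 0 : Q / γ ≤ K * ‖x - z‖
    have hQγ : Q / γ ≤ K * ‖x - z‖ := by
      apply le_of_forall_pos_le_add
      intro ε hε
      set t : ℝ := min 1 (2 * γ * ε / (Q + 1)) with htdef
      have ht0 : 0 < t := lt_min one_pos (by positivity)
      have ht1 : t ≤ 1 := min_le_left _ _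
      have hstep := step t ht0 ht1
      have htle : t ≤ 2 * γ * ε / (Q + 1) := min_le_right _ _
      have hterm : t * Q / (2 * γ) ≤ ε := by
        rw [div_le_iff₀ (by positivity)]
        have h3 : t * Q ≤ (2 * γ * ε / (Q + 1)) * Q :=
          mul_le_mul_of_nonneg_right htle hQ0
        have h4 : (2 * γ * ε / (Q + 1)) * Q ≤ ε * (2 * γ) := by
          rw [div_mul_eq_mul_div, div_le_iff₀ (by positivity)]
          nlinarith
        linarith
      linarith
    have hQle : Q ≤ γ * (K * ‖x - z‖) := by
      rw [div_le_iff₀ hγ] at hQγ; linarith [hQγ]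
    -- ‖x - z‖ ≤ γ K / c₁
    have hxz : ‖x - z‖ ≤ γ * K / c₁ := by
      have hlow : c₁ * ‖x - z‖ ^ 2 ≤ Q := dInner_lower hc₁.le hdc _
      rw [le_div_iff₀ hc₁]
      nlinarith [norm_nonneg (x - z), mul_nonneg hγ.le hK0]
    -- ‖z - β‖ ≤ γ * M / c₁
    have hzβ : ‖z - β‖ = γ * ‖dInvMul d (h' β)‖ := by
      have : z - β = -(γ • dInvMul d (h' β)) := by rw [hz]; module
      rw [this, norm_neg, norm_smul, Real.norm_eq_abs, abs_of_pos hγ]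
    have hzβ' : ‖z - β‖ ≤ γ * (M / c₁) := by
      rw [hzβ]
      apply mul_le_mul_of_nonneg_left _ hγ.le
      exact le_trans (dInvMul_norm_le hc₁ hdc _) ((div_le_div_iff_of_pos_right hc₁).mpr hM)
    -- combine
    have htri : ‖x - β‖ ≤ ‖x - z‖ + ‖z - β‖ := by
      have : x - β = (x - z) + (z - β) := by module
      rw [this]; exact norm_add_le _ _
    -- M / c₁ ≤ √c₂ M / c₁^{3/2}
    have hpow : c₁ ^ ((3:ℝ)/2) = c₁ * Real.sqrt c₁ := by
      have h32 : ((3:ℝ)/2) = (1:ℝ) + (1:ℝ)/2 := by norm_num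
      rw [h32, Real.rpow_add hc₁, Real.rpow_one, ← Real.sqrt_eq_rpow]
    have hMc : M / c₁ ≤ Real.sqrt c₂ * M / c₁ ^ ((3:ℝ)/2) := by
      rw [hpow, div_le_div_iff₀ hc₁ (by positivity)]
      have hs12 : Real.sqrt c₁ ≤ Real.sqrt c₂ := Real.sqrt_le_sqrt hc₁₂
      have hs1 : Real.sqrt c₁ * Real.sqrt c₁ = c₁ := Real.mul_self_sqrt hc₁.le
      nlinarith [mul_le_mul_of_nonneg_right (mul_le_mul_of_nonneg_left hs12 hM0) hc₁.le]
    calc ‖x - β‖ ≤ ‖x - z‖ + ‖z - β‖ := htri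
    _ ≤ γ * K / c₁ + γ * (M / c₁) := add_le_add hxz hzβ'
    _ = (M / c₁ + K / c₁) * γ := by ring
    _ ≤ (Real.sqrt c₂ * M / c₁ ^ ((3:ℝ)/2) + K / c₁) * γ := by
        apply mul_le_mul_of_nonneg_right _ hγ.le
        linarith
  intro γ γ' hγ hγ'
  have h1 := key γ hγ
  have h2 := key γ' hγ'
  have htri : ‖T γ β - T γ' β‖ ≤ ‖T γ β - β‖ + ‖T γ' β - β‖ := by
    have : T γ β - T γ' β = (T γ β - β) - (T γ' β - β) := by module
    rw [this]; exact norm_sub_le _ _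
  calc ‖T γ β - T γ' β‖ ≤ ‖T γ β - β‖ + ‖T γ' β - β‖ := htri
  _ ≤ (Real.sqrt c₂ * M / c₁ ^ ((3:ℝ)/2) + K / c₁) * γ
      + (Real.sqrt c₂ * M / c₁ ^ ((3:ℝ)/2) + K / c₁) * γ' := add_le_add h1 h2
  _ = (Real.sqrt c₂ * M / c₁ ^ ((3:ℝ)/2) + K / c₁) * (γ + γ') := by ring
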